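/- Let p > 0, let T = ℝ/pℤ (the additive circle of circumference p) with its quotient metric and Haar probability measure μ. Let φ : T → ℝ be a bounded positive Borel function, let φ̄ := ∫_T φ dμ, and let κ ≥ 0 satisfy exp(−κ)·φ̄ ≤ φ(x) for every x ∈ T. Then d_L(φ·μ, φ̄·μ) ≤ κ · diam(T) (note diam(T) = p/2). -/

import Mathlib

open MeasureTheory Set Metric

namespace Lem1807

variable {p : ℝ} [hp : Fact (0 < p)]

lemma norm_coe_le_abs (u : ℝ) : ‖(u : AddCircle p)‖ ≤ |u| := by
  rcases le_or_gt |u| (p / 2) with h | h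
  · exact le_of_eq ((AddCircle.norm_coe_eq_abs_iff p hp.out.ne').mpr
      (by rwa [abs_of_pos hp.out]))
  · calc ‖(u : AddCircle p)‖ ≤ |p| / 2 := AddCircle.norm_le_half_period p hp.out.ne'
      _ ≤ |u| := by rw [abs_of_pos hp.out]; linarith

lemma dist_coe_le (u v : ℝ) : dist (u : AddCircle p) (v : AddCircle p) ≤ |u - v| := by
  rw [dist_eq_norm, ← AddCircle.coe_sub]
  exact norm_coe_le_abs _

lemma coe_inj_Ioc {t u v : ℝ} (hu : u ∈ Ioc t (t + p)) (hv : v ∈ Ioc t (t + p))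
    (h : (u : AddCircle p) = v) : u = v := by
  have h0 : ((u - v : ℝ) : AddCircle p) = 0 := by
    rw [AddCircle.coe_sub, h, sub_self]
  obtain ⟨n, hn⟩ := (AddCircle.coe_eq_zero_iff p).mp h0
  have hlt : |(n : ℝ) * p| < p := by
    rw [zsmul_eq_mul] at hn
    rw [hn, abs_lt]
    obtain ⟨hu1, hu2⟩ := hu; obtain ⟨hv1, hv2⟩ := hv
    constructor <;> linarith
  have : |(n : ℝ)| < 1 := by
    rw [abs_mul, abs_of_pos hp.out] at hlt
    by_contra hc
    push_neg at hc
    nlinarith [hp.out]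
  have hn0 : n = 0 := by
    have : |n| < 1 := by exact_mod_cast this
    rwa [Int.abs_lt_one_iff] at this
  rw [hn0, zero_zsmul] at hn
  linarith [hn.symm, sub_eq_zero.mp hn.symm]

set_option maxHeartbeats 800000 in
lemma key {A : Set (AddCircle p)} (hA : IsClosed A) (hne : A.Nonempty) {ε : ℝ} (hε : 0 < ε)
    {x : AddCircle p} (hx : x ∉ thickening ε A) :
    volume A + ENNReal.ofReal (2 * ε) ≤ volume (thickening ε A) := by
  obtain ⟨t, rfl⟩ := QuotientAddGroup.mk_surjective x
  -- distance of every point of A from t is at least ε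
  have hdist : ∀ a : ℝ, (a : AddCircle p) ∈ A → ε ≤ dist (t : AddCircle p) (a : AddCircle p) := by
    intro a ha
    by_contra hc
    push_neg at hc
    exact hx (mem_thickening_iff.mpr ⟨_, ha, hc⟩)
  set A' : Set ℝ := ((↑) : ℝ → AddCircle p) ⁻¹' A ∩ Ioc t (t + p) with hA'
  have hA'sub : A' ⊆ Icc (t + ε) (t + p - ε) := by
    rintro a ⟨haA, hat⟩
    have h1 : ε ≤ a - t := by
      have := (hdist a haA).trans (dist_coe_le t a)
      rwa [abs_of_neg (by linarith [hat.1] : t - a < 0), neg_sub] at this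
    have h2 : ε ≤ t + p - a := by
      have hcoe : ((a - p : ℝ) : AddCircle p) = (a : AddCircle p) := by
        rw [← AddCircle.coe_add_period p (a - p)]; ring_nf
      have := hdist a haA
      rw [← hcoe] at this
      have h3 := this.trans (dist_coe_le t (a - p))
      rw [abs_of_nonneg (by linarith [hat.2] : (0:ℝ) ≤ t - (a - p))] at h3
      linarith
    exact ⟨by linarith, by linarith⟩
  have hA'ne : A'.Nonempty := by
    obtain ⟨a, ha⟩ := hne
    obtain ⟨a₀, rfl⟩ := QuotientAddGroup.mk_surjective a
    obtain ⟨n, hn, -⟩ := existsUnique_add_zsmul_mem_Ioc hp.out a₀ t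
    have hco : ((a₀ + n • p : ℝ) : AddCircle p) = (a₀ : AddCircle p) := by
      rw [AddCircle.coe_add, AddCircle.coe_zsmul, AddCircle.coe_period, smul_zero, add_zero]
    refine ⟨a₀ + n • p, ?_, hn⟩
    have : ((a₀ + n • p : ℝ) : AddCircle p) ∈ A := by rw [hco]; exact ha
    exact this
  have hbdd_below : BddBelow A' := ⟨t + ε, fun y hy => (hA'sub hy).1⟩
  have hbdd_above : BddAbove A' := ⟨t + p - ε, fun y hy => (hA'sub hy).2⟩
  set i := sInf A' with hi_def
  set s := sSup A' with hs_def
  have hi : t + ε ≤ i := le_csInf hA'ne fun y hy => (hA'sub hy).1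
  have hs : s ≤ t + p - ε := csSup_le hA'ne fun y hy => (hA'sub hy).2
  have his : i ≤ s := csInf_le_csSup hA'ne hbdd_below hbdd_above
  set J₁ : Set (AddCircle p) := ((↑) : ℝ → AddCircle p) '' Ioo (i - ε) i with hJ₁
  set J₂ : Set (AddCircle p) := ((↑) : ℝ → AddCircle p) '' Ioo s (s + ε) with hJ₂
  have hI₁sub : Ioo (i - ε) i ⊆ Ioc t (t + p) := fun y hy =>
    ⟨by linarith [hy.1], by linarith [hy.2]⟩
  have hI₂sub : Ioo s (s + ε) ⊆ Ioc t (t + p) := fun y hy =>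
    ⟨by linarith [hy.1, hp.out, hε], by linarith [hy.2]⟩
  -- J₁ and J₂ are inside the thickening
  have hJ₁sub : J₁ ⊆ thickening ε A := by
    rintro _ ⟨y, hy, rfl⟩
    obtain ⟨a, haA', hay⟩ := exists_lt_of_csInf_lt hA'ne (by linarith [hy.1] : i < y + ε)
    refine mem_thickening_iff.mpr ⟨(a : AddCircle p), haA'.1, ?_⟩
    have hya : y < a := lt_of_lt_of_le hy.2 (csInf_le hbdd_below haA')
    calc dist (y : AddCircle p) (a : AddCircle p) ≤ |y - a| := dist_coe_le y a
      _ < ε := by rw [abs_of_neg (by linarith)]; linarith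
  have hJ₂sub : J₂ ⊆ thickening ε A := by
    rintro _ ⟨y, hy, rfl⟩
    obtain ⟨a, haA', hay⟩ := exists_lt_of_lt_csSup hA'ne (by linarith [hy.2] : y - ε < s)
    refine mem_thickening_iff.mpr ⟨(a : AddCircle p), haA'.1, ?_⟩
    have hya : a < y := lt_of_le_of_lt (le_csSup hbdd_above haA') hy.1
    calc dist (y : AddCircle p) (a : AddCircle p) ≤ |y - a| := dist_coe_le y a
      _ < ε := by rw [abs_of_pos (by linarith)]; linarith
  have hAsub : A ⊆ thickening ε A := self_subset_thickening hε A
  -- measurability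
  have hAm : MeasurableSet A := hA.measurableSet
  have hJ₁o : IsOpen J₁ := QuotientAddGroup.isOpenMap_coe _ isOpen_Ioo
  have hJ₂o : IsOpen J₂ := QuotientAddGroup.isOpenMap_coe _ isOpen_Ioo
  -- measures of J₁ and J₂
  have hpre : ∀ I : Set ℝ, I ⊆ Ioc t (t + p) →
      ((↑) : ℝ → AddCircle p) ⁻¹' (((↑) : ℝ → AddCircle p) '' I) ∩ Ioc t (t + p) = I := by
    intro I hI
    ext z
    constructor
    · rintro ⟨⟨y, hyI, hyz⟩, hz⟩
      rwa [coe_inj_Ioc (hI hyI) hz hyz] at hyI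
    · intro hz
      exact ⟨⟨z, hz, rfl⟩, hI hz⟩
  have hvolJ₁ : volume J₁ = ENNReal.ofReal ε := by
    rw [AddCircle.add_projection_respects_measure p t hJ₁o.measurableSet, hJ₁,
      hpre _ hI₁sub, Real.volume_Ioo]
    congr 1; ring
  have hvolJ₂ : volume J₂ = ENNReal.ofReal ε := by
    rw [AddCircle.add_projection_respects_measure p t hJ₂o.measurableSet, hJ₂,
      hpre _ hI₂sub, Real.volume_Ioo]
    congr 1; ring
  -- disjointness
  have hdAJ₁ : Disjoint A J₁ := by
    rw [Set.disjoint_left]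
    rintro _ ha ⟨y, hy, rfl⟩
    have hyA' : y ∈ A' := ⟨ha, hI₁sub hy⟩
    exact absurd (csInf_le hbdd_below hyA') (not_le.mpr hy.2)
  have hdAJ₂ : Disjoint A J₂ := by
    rw [Set.disjoint_left]
    rintro _ ha ⟨y, hy, rfl⟩
    have hyA' : y ∈ A' := ⟨ha, hI₂sub hy⟩
    exact absurd (le_csSup hbdd_above hyA') (not_le.mpr hy.1)
  have hdJ₁J₂ : Disjoint J₁ J₂ := by
    rw [Set.disjoint_left]
    rintro _ ⟨y, hy, rfl⟩ ⟨z, hz, hzy⟩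
    have := coe_inj_Ioc (hI₂sub hz) (hI₁sub hy) hzy
    subst this
    exact absurd (hy.2.trans_le his) (not_lt.mpr hz.1.le)
  -- combine
  have hunion : A ∪ (J₁ ∪ J₂) ⊆ thickening ε A :=
    union_subset hAsub (union_subset hJ₁sub hJ₂sub)
  calc volume A + ENNReal.ofReal (2 * ε)
      = volume A + (volume J₁ + volume J₂) := by
        rw [hvolJ₁, hvolJ₂, ← ENNReal.ofReal_add hε.le hε.le, two_mul]
    _ = volume A + volume (J₁ ∪ J₂) := by
        rw [measure_union hdJ₁J₂ hJ₂o.measurableSet]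
    _ = volume (A ∪ (J₁ ∪ J₂)) := by
        rw [measure_union (Set.disjoint_union_right.mpr ⟨hdAJ₁, hdAJ₂⟩)
          (hJ₁o.union hJ₂o).measurableSet]
    _ ≤ volume (thickening ε A) := measure_mono hunion

end Lem1807

/-- The Lévy–Prokhorov-type distance of the paper:
`d_L(μ, ν) = inf {ε > 0 | ∀ A, ν(A_ε) ≥ μ(A)}`, where `A_ε` is the open
`ε`-neighborhood of `A`. -/
noncomputable def levyDist {X : Type*} [PseudoMetricSpace X] [MeasurableSpace X]
    (μ ν : Measure X) : ℝ :=
  sInf {ε : ℝ | 0 < ε ∧ ∀ A : Set X, μ A ≤ ν (Metric.thickening ε A)}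

/-- Lemma 18.0.7: on the circle `T = ℝ/pℤ` with Haar probability measure `μ`,
if `φ` is a bounded positive Borel function with average `φ̄` and
`exp(−κ)·φ̄ ≤ φ`, then `d_L(φ·μ, φ̄·μ) ≤ κ · diam T`. -/
theorem stmt6 {p : ℝ} [hp : Fact (0 < p)]
    (φ : AddCircle p → ℝ) (hmeas : Measurable φ)
    (hbdd : ∃ C : ℝ, ∀ x, φ x ≤ C) (hpos : ∀ x, 0 < φ x)
    {κ : ℝ} (hκ : 0 ≤ κ)
    (h : ∀ x, Real.exp (-κ) * (∫ y, φ y ∂(AddCircle.haarAddCircle)) ≤ φ x) :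
    levyDist
      (AddCircle.haarAddCircle.withDensity fun x => ENNReal.ofReal (φ x))
      (AddCircle.haarAddCircle.withDensity fun _ =>
        ENNReal.ofReal (∫ y, φ y ∂(AddCircle.haarAddCircle)))
      ≤ κ * Metric.diam (Set.univ : Set (AddCircle p)) := by
  set μ : Measure (AddCircle p) := AddCircle.haarAddCircle with hμ
  set c : ℝ := ∫ y, φ y ∂μ with hc_def
  obtain ⟨C, hC⟩ := hbdd
  have hinteg : Integrable φ μ := by
    refine ⟨hmeas.aestronglyMeasurable, ?_⟩
    refine HasFiniteIntegral.of_bounded (C := C) (ae_of_all _ fun x => ?_)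
    rw [Real.norm_eq_abs, abs_of_pos (hpos x)]
    exact hC x
  have hc : 0 < c := by
    rw [hc_def, integral_pos_iff_support_of_nonneg (fun x => (hpos x).le) hinteg]
    have hsupp : Function.support φ = univ := by
      ext x; simp [Function.mem_support, (hpos x).ne']
    rw [hsupp]
    simp
  set D : ℝ := Metric.diam (Set.univ : Set (AddCircle p)) with hD_def
  have hD2 : p / 2 ≤ D := by
    have h1 : dist (0 : AddCircle p) ((p / 2 : ℝ) : AddCircle p) = p / 2 := by
      rw [dist_zero_left, AddCircle.norm_half_period_eq, abs_of_pos hp.out]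
    rw [hD_def, ← h1]
    exact dist_le_diam_of_mem (isBounded_of_compactSpace) (mem_univ _) (mem_univ _)
  have hD0 : 0 ≤ D := diam_nonneg
  -- main reduction
  refine le_of_forall_pos_le_add fun δ hδ => ?_
  refine csInf_le ⟨0, fun y hy => hy.1.le⟩ ?_
  set ε : ℝ := κ * D + δ with hε_def
  have hε : 0 < ε := add_pos_of_nonneg_of_pos (mul_nonneg hκ hD0) hδ
  refine ⟨hε, fun A => ?_⟩
  -- reduce to closed sets
  have hred : (μ.withDensity fun x => ENNReal.ofReal (φ x)) A ≤
      (μ.withDensity fun x => ENNReal.ofReal (φ x)) (closure A) :=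
    measure_mono subset_closure
  rw [← thickening_closure]
  refine hred.trans ?_
  -- now work with B := closure A, a closed set
  set B : Set (AddCircle p) := closure A with hB_def
  have hBc : IsClosed B := isClosed_closure
  clear_value B
  clear hred hB_def A
  rcases eq_empty_or_nonempty B with rfl | hBne
  · simp
  have hBm : MeasurableSet B := hBc.measurableSet
  have hthick_m : MeasurableSet (thickening ε B) := (isOpen_thickening).measurableSet
  -- rewrite both sides
  rw [withDensity_const, Measure.smul_apply, smul_eq_mul,
    withDensity_apply _ hBm]
  have hLHS : ∫⁻ x in B, ENNReal.ofReal (φ x) ∂μ = ENNReal.ofReal (∫ x in B, φ x ∂μ) :=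
    (ofReal_integral_eq_lintegral_ofReal hinteg.integrableOn
      (ae_of_all _ fun x => (hpos x).le)).symm
  rw [hLHS]
  -- real quantities
  set a : ℝ := (μ B).toReal with ha_def
  set m : ℝ := (μ (thickening ε B)).toReal with hm_def
  have ha0 : 0 ≤ a := ENNReal.toReal_nonneg
  have ha1 : a ≤ 1 := by
    rw [ha_def]
    exact ENNReal.toReal_le_of_le_ofReal zero_le_one (by simpa using prob_le_one (μ := μ) (s := B))
  -- geometric step
  have hgeom : 1 - Real.exp (-κ) * (1 - a) ≤ m := by
    by_cases hu : thickening ε B = univ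
    · have : m = 1 := by rw [hm_def, hu]; simp
      rw [this]
      nlinarith [Real.exp_pos (-κ)]
    · obtain ⟨x, hx⟩ := (ne_univ_iff_exists_notMem _).mp hu
      have hkey := Lem1807.key hBc hBne hε hx
      -- convert volume to haar
      have hconv : ∀ S : Set (AddCircle p), volume S = ENNReal.ofReal p * μ S := by
        intro S
        rw [hμ, AddCircle.volume_eq_smul_haarAddCircle, Measure.smul_apply, smul_eq_mul]
      rw [hconv, hconv] at hkey
      have hfin : ENNReal.ofReal p * μ (thickening ε B) ≠ ⊤ :=
        ENNReal.mul_ne_top ENNReal.ofReal_ne_top (measure_ne_top μ _)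
      have hreal := ENNReal.toReal_mono hfin hkey
      rw [ENNReal.toReal_add (ENNReal.mul_ne_top ENNReal.ofReal_ne_top (measure_ne_top μ _))
        ENNReal.ofReal_ne_top, ENNReal.toReal_mul, ENNReal.toReal_mul,
        ENNReal.toReal_ofReal hp.out.le, ENNReal.toReal_ofReal (by positivity)] at hreal
      -- hreal : p * a + 2 * ε ≤ p * m
      have hreal' : p * a + 2 * ε ≤ p * m := hreal
      have hE1 : Real.exp (-κ) ≤ 1 := Real.exp_le_one_iff.mpr (by linarith)
      have hE2 : 1 - κ ≤ Real.exp (-κ) := by linarith [Real.add_one_le_exp (-κ)]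
      have h3 : κ * (p / 2) + δ ≤ ε := by
        have := mul_le_mul_of_nonneg_left hD2 hκ
        rw [hε_def]; linarith
      have h1 : 0 ≤ (κ - (1 - Real.exp (-κ))) * p :=
        mul_nonneg (by linarith) hp.out.le
      have h2 : 0 ≤ ((1 - Real.exp (-κ)) * a) * p :=
        mul_nonneg (mul_nonneg (by linarith) ha0) hp.out.le
      nlinarith [hreal', h1, h2, h3, hp.out, hδ]
  -- analytic step
  have hint : ∫ x in B, φ x ∂μ ≤ c * m := by
    have hsplit : (∫ x in B, φ x ∂μ) + ∫ x in Bᶜ, φ x ∂μ = c := integral_add_compl hBm hinteg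
    have hcompl : Real.exp (-κ) * c * (μ Bᶜ).toReal ≤ ∫ x in Bᶜ, φ x ∂μ := by
      have := setIntegral_ge_of_const_le hBm.compl (measure_ne_top μ _)
        (fun x _ => h x) hinteg.integrableOn
      rw [smul_eq_mul, measureReal_def, mul_comm] at this
      exact this
    have hmc : (μ Bᶜ).toReal = 1 - a := by
      rw [prob_compl_eq_one_sub hBm, ha_def,
        ENNReal.toReal_sub_of_le (by simpa using prob_le_one (μ := μ) (s := B)) ENNReal.one_ne_top,
        ENNReal.toReal_one]
    rw [hmc] at hcompl
    have : (∫ x in B, φ x ∂μ) ≤ c - Real.exp (-κ) * c * (1 - a) := by linarith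
    refine this.trans ?_
    nlinarith [hc, hgeom]
  calc ENNReal.ofReal (∫ x in B, φ x ∂μ) ≤ ENNReal.ofReal (c * m) :=
        ENNReal.ofReal_le_ofReal hint
    _ = ENNReal.ofReal c * ENNReal.ofReal m := ENNReal.ofReal_mul hc.le
    _ = ENNReal.ofReal c * μ (thickening ε B) := by
        rw [hm_def, ENNReal.ofReal_toReal (measure_ne_top μ _)]
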